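/- For all η ∈ [0,1] and α ∈ [0,1], g⁻¹(H_b(ηα)) ≥ η · g⁻¹(H_b(α)), with equality if and only if η ∈ {0,1} or α = 0. -/

import Mathlib

noncomputable def g (x : ℝ) : ℝ := (x + 1) * Real.log (x + 1) - x * Real.log x

noncomputable def Hb (p : ℝ) : ℝ := -(p * Real.log p) - (1 - p) * Real.log (1 - p)

open Real Filter Set

lemma g_zero : g 0 = 0 := by simp [g]

lemma g_continuous : Continuous g := by
  have h1 : Continuous fun x : ℝ => (x + 1) * Real.log (x + 1) :=
    Real.continuous_mul_log.comp (continuous_id.add continuous_const)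
  exact h1.sub Real.continuous_mul_log

lemma g_hasDerivAt {x : ℝ} (hx : 0 < x) :
    HasDerivAt g (Real.log (x + 1) - Real.log x) x := by
  have h1 : HasDerivAt (fun x : ℝ => (x + 1) * Real.log (x + 1))
      ((Real.log (x + 1) + 1) * 1) x := by
    exact (Real.hasDerivAt_mul_log (by linarith)).comp x
      ((hasDerivAt_id x).add_const 1)
  have h2 : HasDerivAt (fun x : ℝ => x * Real.log x) (Real.log x + 1) x :=
    Real.hasDerivAt_mul_log hx.ne'
  have := h1.sub h2
  rw [show Real.log (x + 1) - Real.log x = (Real.log (x + 1) + 1) * 1 - (Real.log x + 1) by ring]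
  exact this

lemma g_strictMonoOn : StrictMonoOn g (Set.Ici 0) := by
  apply strictMonoOn_of_deriv_pos (convex_Ici 0) g_continuous.continuousOn
  intro x hx
  rw [interior_Ici] at hx
  rw [(g_hasDerivAt hx).deriv]
  have := Real.log_lt_log hx (by linarith : x < x + 1)
  linarith

lemma Hb_zero : Hb 0 = 0 := by simp [Hb]

lemma Hb_one : Hb 1 = 0 := by simp [Hb]

lemma Hb_nonneg {p : ℝ} (h0 : 0 ≤ p) (h1 : p ≤ 1) : 0 ≤ Hb p := by
  have a1 : p * Real.log p ≤ 0 :=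
    mul_nonpos_of_nonneg_of_nonpos h0 (Real.log_nonpos h0 h1)
  have a2 : (1 - p) * Real.log (1 - p) ≤ 0 :=
    mul_nonpos_of_nonneg_of_nonpos (by linarith) (Real.log_nonpos (by linarith) (by linarith))
  unfold Hb; linarith

lemma Hb_pos {p : ℝ} (h0 : 0 < p) (h1 : p < 1) : 0 < Hb p := by
  have a1 : p * Real.log p < 0 :=
    mul_neg_of_pos_of_neg h0 (Real.log_neg h0 h1)
  have a2 : (1 - p) * Real.log (1 - p) < 0 :=
    mul_neg_of_pos_of_neg (by linarith) (Real.log_neg (by linarith) (by linarith))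
  unfold Hb; linarith

lemma Hb_hasDerivAt {p : ℝ} (h0 : 0 < p) (h1 : p < 1) :
    HasDerivAt Hb (Real.log (1 - p) - Real.log p) p := by
  have hp : HasDerivAt (fun p : ℝ => p * Real.log p) (Real.log p + 1) p :=
    Real.hasDerivAt_mul_log h0.ne'
  have hq : HasDerivAt (fun p : ℝ => (1 - p) * Real.log (1 - p))
      ((Real.log (1 - p) + 1) * (-1)) p := by
    exact (Real.hasDerivAt_mul_log (by linarith : (1:ℝ) - p ≠ 0)).comp p
      ((hasDerivAt_id p).const_sub 1)
  have := hp.neg.sub hq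
  rw [show Real.log (1 - p) - Real.log p = -(Real.log p + 1) - (Real.log (1 - p) + 1) * (-1) by ring]
  exact this

lemma g_ratio {β : ℝ} (h0 : 0 < β) (h1 : β < 1) :
    g (β / (1 - β)) = Hb β / (1 - β) := by
  have hb : (1:ℝ) - β ≠ 0 := by linarith
  have e1 : β / (1 - β) + 1 = 1 / (1 - β) := by field_simp; ring
  have e2 : Real.log (1 / (1 - β)) = -Real.log (1 - β) := by
    rw [one_div, Real.log_inv]
  have e3 : Real.log (β / (1 - β)) = Real.log β - Real.log (1 - β) :=
    Real.log_div h0.ne' hb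
  unfold g Hb
  rw [e1, e2, e3]
  field_simp
  ring

/-- The extension of `g` to all of `ℝ`. -/
noncomputable def Gext : ℝ → ℝ := fun t => if t ≤ 0 then t else g t

lemma Gext_strictMono : StrictMono Gext := by
  intro a b hab
  unfold Gext
  by_cases ha : a ≤ 0 <;> by_cases hb : b ≤ 0 <;> simp only [ha, hb, if_true, if_false]
  · exact hab
  · push_neg at hb
    have : g 0 < g b := g_strictMonoOn self_mem_Ici hb.le hb
    rw [g_zero] at this; linarith
  · push_neg at ha; exact absurd (hab.trans_le hb) (not_lt.mpr ha.le)
  · push_neg at ha hb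
    exact g_strictMonoOn ha.le hb.le hab

lemma Gext_continuous : Continuous Gext := by
  apply Continuous.if_le continuous_id g_continuous continuous_id continuous_const
  intro x hx
  simp only [id_eq] at hx
  simp [hx, g_zero]

lemma Gext_surjective : Function.Surjective Gext := by
  apply Gext_continuous.surjective
  · apply tendsto_atTop_mono' _ _ Real.tendsto_log_atTop
    filter_upwards [eventually_ge_atTop (1:ℝ)] with t ht
    have h1 : ¬ t ≤ 0 := by linarith
    have h2 : Real.log t ≤ Real.log (t + 1) :=
      (Real.log_le_log_iff (by linarith) (by linarith)).mpr (by linarith)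
    have h3 : 0 ≤ Real.log t := Real.log_nonneg ht
    simp only [Gext, h1, if_false, g]
    nlinarith
  · apply Tendsto.congr' _ tendsto_id
    filter_upwards [eventually_le_atBot (0:ℝ)] with t ht
    simp [Gext, ht]

section
variable (ginv : ℝ → ℝ) (hinv : ∀ x ∈ Set.Ici (0:ℝ), 0 ≤ ginv x ∧ g (ginv x) = x)

include hinv

lemma ginv_zero : ginv 0 = 0 := by
  have h := hinv 0 (by exact self_mem_Ici)
  exact g_strictMonoOn.injOn h.1 (self_mem_Ici) (by rw [h.2, g_zero])

lemma ginv_lt_of_lt {x y : ℝ} (hx : 0 ≤ x) (hy : 0 ≤ y) (h : x < y) :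
    ginv x < ginv y := by
  have hx' := hinv x hx
  have hy' := hinv y hy
  rw [← hx'.2, ← hy'.2] at h
  exact (g_strictMonoOn.lt_iff_lt hx'.1 hy'.1).mp h

lemma ginv_pos {x : ℝ} (hx : 0 < x) : 0 < ginv x := by
  have := ginv_lt_of_lt ginv hinv le_rfl hx.le hx
  rwa [ginv_zero ginv hinv] at this

lemma ginv_gt_of_g_lt {z x : ℝ} (hz : 0 ≤ z) (hx : 0 ≤ x) (h : g z < x) :
    z < ginv x := by
  have hx' := hinv x hx
  rw [← hx'.2] at h
  exact (g_strictMonoOn.lt_iff_lt hz hx'.1).mp h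

lemma ginv_eq_symm {x : ℝ} (hx : 0 ≤ x) :
    ginv x = (StrictMono.orderIsoOfSurjective Gext Gext_strictMono Gext_surjective).symm x := by
  set e := StrictMono.orderIsoOfSurjective Gext Gext_strictMono Gext_surjective
  apply e.injective
  have hx' := hinv x hx
  have h1 : e (ginv x) = x := by
    show Gext (ginv x) = x
    unfold Gext
    rcases lt_or_eq_of_le hx'.1 with h | h
    · rw [if_neg (not_le.mpr h), hx'.2]
    · rw [if_pos (le_of_eq h.symm)]
      have := hx'.2
      rw [← h, g_zero] at this
      rw [← h, this]
  rw [h1, OrderIso.apply_symm_apply]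

lemma ginv_continuousAt {x : ℝ} (hx : 0 < x) : ContinuousAt ginv x := by
  set e := StrictMono.orderIsoOfSurjective Gext Gext_strictMono Gext_surjective
  have hc : ContinuousAt (e.symm : ℝ → ℝ) x := (OrderIso.continuous e.symm).continuousAt
  apply hc.congr
  filter_upwards [eventually_gt_nhds hx] with y hy
  exact (ginv_eq_symm ginv hinv hy.le).symm

lemma ginv_hasDerivAt {x : ℝ} (hx : 0 < x) :
    HasDerivAt ginv (Real.log (ginv x + 1) - Real.log (ginv x))⁻¹ x := by
  have hu : 0 < ginv x := ginv_pos ginv hinv hx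
  have hd : (0:ℝ) < Real.log (ginv x + 1) - Real.log (ginv x) := by
    have := Real.log_lt_log hu (by linarith : ginv x < ginv x + 1)
    linarith
  apply HasDerivAt.of_local_left_inverse (ginv_continuousAt ginv hinv hx)
    (g_hasDerivAt hu) hd.ne'
  filter_upwards [eventually_gt_nhds hx] with y hy
  exact (hinv y hy.le).2

end

section
variable (ginv : ℝ → ℝ) (hinv : ∀ x ∈ Set.Ici (0:ℝ), 0 ≤ ginv x ∧ g (ginv x) = x)

include hinv

/-- Key bound: `ginv (Hb β) < β / (1 - β)` for `β ∈ (0,1)`. -/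
lemma ginv_lt_ratio {β : ℝ} (h0 : 0 < β) (h1 : β < 1) :
    ginv (Hb β) < β / (1 - β) := by
  have hHb : 0 < Hb β := Hb_pos h0 h1
  have hs : (0:ℝ) ≤ β / (1 - β) := div_nonneg h0.le (by linarith)
  have hx' := hinv (Hb β) hHb.le
  have hlt : g (ginv (Hb β)) < g (β / (1 - β)) := by
    rw [hx'.2, g_ratio h0 h1]
    rw [lt_div_iff₀ (by linarith : (0:ℝ) < 1 - β)]
    nlinarith
  exact (g_strictMonoOn.lt_iff_lt hx'.1 hs).mp hlt

lemma hasDerivAt_ratio {β : ℝ} (h0 : 0 < β) (h1 : β < 1) :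
    HasDerivAt (fun b => ginv (Hb b) / b)
      (((Real.log (ginv (Hb β) + 1) - Real.log (ginv (Hb β)))⁻¹ *
          (Real.log (1 - β) - Real.log β) * β - ginv (Hb β) * 1) / β ^ 2) β := by
  have hHb : 0 < Hb β := Hb_pos h0 h1
  have hF : HasDerivAt (fun b => ginv (Hb b))
      ((Real.log (ginv (Hb β) + 1) - Real.log (ginv (Hb β)))⁻¹ *
        (Real.log (1 - β) - Real.log β)) β :=
    (ginv_hasDerivAt ginv hinv hHb).comp β (Hb_hasDerivAt h0 h1)
  exact hF.div (hasDerivAt_id β) h0.ne'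

lemma deriv_ratio_neg {β : ℝ} (h0 : 0 < β) (h1 : β < 1) :
    ((Real.log (ginv (Hb β) + 1) - Real.log (ginv (Hb β)))⁻¹ *
        (Real.log (1 - β) - Real.log β) * β - ginv (Hb β) * 1) / β ^ 2 < 0 := by
  set u := ginv (Hb β) with hu
  have hHb : 0 < Hb β := Hb_pos h0 h1
  have hupos : 0 < u := ginv_pos ginv hinv hHb
  have hgu : g u = Hb β := (hinv (Hb β) hHb.le).2
  have hc : (0:ℝ) < Real.log (u + 1) - Real.log u := by
    have := Real.log_lt_log hupos (by linarith : u < u + 1)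
    linarith
  set c := Real.log (u + 1) - Real.log u with hcdef
  -- u * c = Hb β - log (u+1)
  have hiden : u * c = Hb β - Real.log (u + 1) := by
    rw [hcdef, ← hgu]
    unfold g
    ring
  -- log (u+1) < - log (1-β)
  have hratio : u < β / (1 - β) := ginv_lt_ratio ginv hinv h0 h1
  have hlog : Real.log (u + 1) < -Real.log (1 - β) := by
    have h2 : u + 1 < 1 / (1 - β) := by
      rw [lt_div_iff₀ (by linarith : (0:ℝ) < 1 - β)]
      have h3 : u * (1 - β) < β := by
        rw [← lt_div_iff₀ (by linarith : (0:ℝ) < 1 - β)]; exact hratio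
      nlinarith
    have := Real.log_lt_log (by linarith : (0:ℝ) < u + 1) h2
    rwa [one_div, Real.log_inv] at this
  -- Hb β + log (1-β) = β * (log (1-β) - log β)
  have hHbeq : Hb β + Real.log (1 - β) = β * (Real.log (1 - β) - Real.log β) := by
    unfold Hb; ring
  -- numerator negative
  have key : β * (Real.log (1 - β) - Real.log β) < u * c := by
    calc β * (Real.log (1 - β) - Real.log β) = Hb β + Real.log (1 - β) := hHbeq.symm
      _ < Hb β - Real.log (u + 1) := by linarith
      _ = u * c := hiden.symm
  have hnum : c⁻¹ * (Real.log (1 - β) - Real.log β) * β - u * 1 < 0 := by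
    nlinarith [mul_pos (sub_pos.mpr key) (inv_pos.mpr hc), mul_inv_cancel₀ hc.ne']
  exact div_neg_of_neg_of_pos hnum (by positivity)

lemma ratio_strictAntiOn :
    StrictAntiOn (fun b => ginv (Hb b) / b) (Set.Ioo (0:ℝ) 1) := by
  apply strictAntiOn_of_deriv_neg (convex_Ioo 0 1)
  · intro x hx
    exact ((hasDerivAt_ratio ginv hinv hx.1 hx.2).continuousAt).continuousWithinAt
  · intro x hx
    rw [interior_Ioo] at hx
    rw [(hasDerivAt_ratio ginv hinv hx.1 hx.2).deriv]
    exact deriv_ratio_neg ginv hinv hx.1 hx.2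

lemma main_strict {η α : ℝ} (hη0 : 0 < η) (hη1 : η < 1) (hα0 : 0 < α) (hα1 : α ≤ 1) :
    η * ginv (Hb α) < ginv (Hb (η * α)) := by
  rcases eq_or_lt_of_le hα1 with h | h
  · subst h
    rw [Hb_one, ginv_zero ginv hinv, mul_one, mul_zero]
    exact ginv_pos ginv hinv (Hb_pos hη0 hη1)
  · have hmem1 : η * α ∈ Set.Ioo (0:ℝ) 1 := ⟨by positivity, by nlinarith⟩
    have hmem2 : α ∈ Set.Ioo (0:ℝ) 1 := ⟨hα0, h⟩
    have hlt : η * α < α := by nlinarith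
    have := ratio_strictAntiOn ginv hinv hmem1 hmem2 hlt
    -- this : ginv (Hb α) / α < ginv (Hb (η*α)) / (η*α)
    have hpos : (0:ℝ) < η * α := by positivity
    rw [div_lt_div_iff₀ hα0 hpos] at this
    nlinarith [this, hα0]

end

theorem epni_two_point (ginv : ℝ → ℝ)
    (hinv : ∀ x ∈ Set.Ici (0:ℝ), 0 ≤ ginv x ∧ g (ginv x) = x) :
    ∀ η ∈ Set.Icc (0:ℝ) 1, ∀ α ∈ Set.Icc (0:ℝ) 1,
      η * ginv (Hb α) ≤ ginv (Hb (η * α)) ∧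
      (ginv (Hb (η * α)) = η * ginv (Hb α) ↔ (η = 0 ∨ η = 1) ∨ α = 0) := by
  intro η hη α hα
  obtain ⟨hη0, hη1⟩ := hη
  obtain ⟨hα0, hα1⟩ := hα
  by_cases he0 : η = 0
  · subst he0
    simp only [zero_mul, Hb_zero, ginv_zero ginv hinv]
    exact ⟨le_rfl, by simp⟩
  by_cases he1 : η = 1
  · subst he1
    simp only [one_mul]
    exact ⟨le_rfl, by simp⟩
  by_cases ha0 : α = 0
  · subst ha0
    simp only [mul_zero, Hb_zero, ginv_zero ginv hinv]
    exact ⟨le_rfl, by simp⟩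
  · have h := main_strict ginv hinv (lt_of_le_of_ne hη0 (Ne.symm he0))
      (lt_of_le_of_ne hη1 he1) (lt_of_le_of_ne hα0 (Ne.symm ha0)) hα1
    refine ⟨h.le, ?_⟩
    constructor
    · intro heq; exact absurd heq h.ne'
    · rintro ((h' | h') | h') <;> exact absurd h' (by assumption)
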